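/- Theorem 1 (simplified, no uncertainty block): consider signals generated by y[t] = ∑_{τ=0}^{t} (Φ_{yu}[τ] ⬝ u[t−τ] + Φ_{yw}[τ] ⬝ w[t−τ]) and u[t] = π(y[t]), where Φ_{yu}, Φ_{yw} are entrywise-summable matrix sequences, the disturbance satisfies |w[t]| ≤ w̄ componentwise for all t, and π : ℝ^p → ℝ^m satisfies: |y| ≤ ȳ → |π(y)| ≤ ū. If abs(Φ_{yw}) ⬝ w̄ + abs(Φ_{yu}) ⬝ ū ≤ ȳ componentwise (where abs(Φ) = ∑_t |Φ[t]|), then |y[t]| ≤ ȳ and |u[t]| ≤ ū for all t ≥ 0. -/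
import Mathlib


/-- Theorem 1 of the paper, simplified (no uncertainty block): the set
`{(y,u) : |y| ≤ ȳ, |u| ≤ ū}` is invariant for the closed loop. -/
theorem stmt_5 {p q pw : ℕ}
    (Φyu : ℕ → Matrix (Fin p) (Fin q) ℝ) (Φyw : ℕ → Matrix (Fin p) (Fin pw) ℝ)
    (hΦyu : ∀ i j, Summable fun t => |Φyu t i j|)
    (hΦyw : ∀ i j, Summable fun t => |Φyw t i j|)
    (hwellposed : Φyu 0 = 0)
    (π : (Fin p → ℝ) → (Fin q → ℝ))
    (w : ℕ → Fin pw → ℝ) (y : ℕ → Fin p → ℝ) (u : ℕ → Fin q → ℝ)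
    (wbar : Fin pw → ℝ) (ybar : Fin p → ℝ) (ubar : Fin q → ℝ)
    (hwbar : ∀ i, 0 ≤ wbar i) (hybar : ∀ i, 0 ≤ ybar i) (hubar : ∀ k, 0 ≤ ubar k)
    (hw : ∀ t i, |w t i| ≤ wbar i)
    (hy : ∀ t, y t = ∑ τ ∈ Finset.range (t + 1),
      ((Φyu τ).mulVec (u (t - τ)) + (Φyw τ).mulVec (w (t - τ))))
    (hu : ∀ t, u t = π (y t))
    (hπ : ∀ v : Fin p → ℝ, (∀ i, |v i| ≤ ybar i) → ∀ k, |π v k| ≤ ubar k)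
    (hfeedback : ∀ i,
      Matrix.mulVec (fun i j => ∑' t, |Φyw t i j|) wbar i +
      Matrix.mulVec (fun i j => ∑' t, |Φyu t i j|) ubar i ≤ ybar i) :
    ∀ t, (∀ i, |y t i| ≤ ybar i) ∧ (∀ k, |u t k| ≤ ubar k) := by
  intro t
  induction t using Nat.strong_induction_on with
  | _ t ih =>
    have hyt : ∀ i, |y t i| ≤ ybar i := by
      intro i
      have hterm : ∀ τ ∈ Finset.range (t + 1),
          |((Φyu τ).mulVec (u (t - τ)) + (Φyw τ).mulVec (w (t - τ))) i| ≤
            (∑ j, |Φyu τ i j| * ubar j) + (∑ j, |Φyw τ i j| * wbar j) := by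
        intro τ hτ
        have hτ' : τ ≤ t := Nat.lt_succ_iff.mp (Finset.mem_range.mp hτ)
        have hubd : ∀ j, |Φyu τ i j * u (t - τ) j| ≤ |Φyu τ i j| * ubar j := by
          intro j
          rcases Nat.eq_zero_or_pos τ with h0 | hpos
          · simp [h0, hwellposed]
          · have hlt : t - τ < t := by
              rcases Nat.eq_zero_or_pos t with ht0 | htpos
              · omega
              · omega
            have := (ih (t - τ) hlt).2 j
            rw [abs_mul]
            exact mul_le_mul_of_nonneg_left this (abs_nonneg _)
        have hwbd : ∀ j, |Φyw τ i j * w (t - τ) j| ≤ |Φyw τ i j| * wbar j := by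
          intro j
          rw [abs_mul]
          exact mul_le_mul_of_nonneg_left (hw _ _) (abs_nonneg _)
        simp only [Matrix.mulVec, dotProduct, Pi.add_apply]
        calc |(∑ j, Φyu τ i j * u (t - τ) j) + ∑ j, Φyw τ i j * w (t - τ) j|
            ≤ |∑ j, Φyu τ i j * u (t - τ) j| + |∑ j, Φyw τ i j * w (t - τ) j| :=
              abs_add_le _ _
          _ ≤ (∑ j, |Φyu τ i j| * ubar j) + (∑ j, |Φyw τ i j| * wbar j) := by
              apply add_le_add
              · refine le_trans (Finset.abs_sum_le_sum_abs _ _) ?_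
                exact Finset.sum_le_sum fun j _ => hubd j
              · refine le_trans (Finset.abs_sum_le_sum_abs _ _) ?_
                exact Finset.sum_le_sum fun j _ => hwbd j
      have h1 : |y t i| ≤ ∑ τ ∈ Finset.range (t + 1),
          ((∑ j, |Φyu τ i j| * ubar j) + (∑ j, |Φyw τ i j| * wbar j)) := by
        rw [hy t]
        refine le_trans ?_ (Finset.sum_le_sum hterm)
        simpa using Finset.abs_sum_le_sum_abs
          (fun τ => ((Φyu τ).mulVec (u (t - τ)) + (Φyw τ).mulVec (w (t - τ))) i)
          (Finset.range (t + 1))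
      have hsumu : ∀ j, Summable fun τ => |Φyu τ i j| * ubar j :=
        fun j => (hΦyu i j).mul_right _
      have hsumw : ∀ j, Summable fun τ => |Φyw τ i j| * wbar j :=
        fun j => (hΦyw i j).mul_right _
      have h2 : ∑ τ ∈ Finset.range (t + 1),
          ((∑ j, |Φyu τ i j| * ubar j) + (∑ j, |Φyw τ i j| * wbar j)) ≤
          (∑ j, (∑' τ, |Φyu τ i j|) * ubar j) + (∑ j, (∑' τ, |Φyw τ i j|) * wbar j) := by
        rw [Finset.sum_add_distrib, Finset.sum_comm, Finset.sum_comm (t := Finset.univ)]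
        apply add_le_add
        · refine Finset.sum_le_sum fun j _ => ?_
          rw [← tsum_mul_right]
          exact Summable.sum_le_tsum _ (fun τ _ => mul_nonneg (abs_nonneg _) (hubar j)) (hsumu j)
        · refine Finset.sum_le_sum fun j _ => ?_
          rw [← tsum_mul_right]
          exact Summable.sum_le_tsum _ (fun τ _ => mul_nonneg (abs_nonneg _) (hwbar j)) (hsumw j)
      refine le_trans h1 (le_trans h2 ?_)
      have := hfeedback i
      simp only [Matrix.mulVec, dotProduct] at this
      linarith
    exact ⟨hyt, fun k => by rw [hu t]; exact hπ _ hyt k⟩
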